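/- Let f, g : ℝ → ℝ be convex functions. Then the function ψ = g - (g - f)^c is convex, where (g-f)^c denotes the convex hull of g - f. -/

import Mathlib

open MeasureTheory Set Filter

noncomputable def pot (eta : Measure ℝ) (k : ℝ) : ℝ := ∫ x, max (k - x) 0 ∂eta

noncomputable def cpot (eta : Measure ℝ) (k : ℝ) : ℝ := ∫ x, max (x - k) 0 ∂eta

/-- `c` is the convex hull (largest convex minorant) of `f`. -/
def IsConvexHull (f c : ℝ → ℝ) : Prop :=
  ConvexOn ℝ Set.univ c ∧ (∀ x, c x ≤ f x) ∧
    ∀ g : ℝ → ℝ, ConvexOn ℝ Set.univ g → (∀ x, g x ≤ f x) → ∀ x, g x ≤ c x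

/-- Convex order: `∫ f dη ≤ ∫ f dχ` for all convex `f` for which both integrals exist. -/
def Cx (eta chi : Measure ℝ) : Prop :=
  ∀ f : ℝ → ℝ, ConvexOn ℝ Set.univ f → Integrable f eta → Integrable f chi →
    ∫ x, f x ∂eta ≤ ∫ x, f x ∂chi

/-- Extended convex order: `∫ f dη ≤ ∫ f dχ` for all nonnegative convex `f`. -/
def ECx (eta chi : Measure ℝ) : Prop :=
  ∀ f : ℝ → ℝ, ConvexOn ℝ Set.univ f → (∀ x, 0 ≤ f x) →
    ∫⁻ x, ENNReal.ofReal (f x) ∂eta ≤ ∫⁻ x, ENNReal.ofReal (f x) ∂chi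

/-- The class `𝒟(a, b)`: nonnegative, nondecreasing, convex functions vanishing at `-∞`
and asymptotic to `a * z - b` at `+∞`. -/
def MemD (a b : ℝ) (f : ℝ → ℝ) : Prop :=
  ConvexOn ℝ Set.univ f ∧ Monotone f ∧ (∀ x, 0 ≤ f x) ∧
    Tendsto f atBot (nhds 0) ∧
    Tendsto (fun z => f z - (a * z - b)) atTop (nhds 0)

/-- `S` is the shadow of `μ` in `ν`. -/
def IsShadow (mu nu S : Measure ℝ) : Prop :=
  Cx mu S ∧ S ≤ nu ∧ ∀ eta : Measure ℝ, Cx mu eta → eta ≤ nu → Cx S eta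

/-- `T` is the counter-shadow of `μ` in `ν`. -/
def IsCounterShadow (mu nu T : Measure ℝ) : Prop :=
  Cx mu T ∧ T ≤ nu ∧ ∀ eta : Measure ℝ, Cx mu eta → eta ≤ nu → Cx eta T

private lemma convexOn_affine (m b : ℝ) : ConvexOn ℝ Set.univ (fun t : ℝ => m * t + b) := by
  refine ⟨convex_univ, ?_⟩
  intro x _ y _ a b' ha hb' hab
  simp only [smul_eq_mul]
  have hb'' : b' = 1 - a := by linarith
  subst hb''
  apply le_of_eq; ring

private lemma conv3 {c : ℝ → ℝ} (hc : ConvexOn ℝ Set.univ c) {u t v : ℝ}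
    (h1 : u ≤ t) (h2 : t ≤ v) (h3 : u < v) :
    c t ≤ (v - t) / (v - u) * c u + (t - u) / (v - u) * c v := by
  have hvu : (0:ℝ) < v - u := by linarith
  have key := hc.2 (mem_univ u) (mem_univ v)
    (div_nonneg (show (0:ℝ) ≤ v - t by linarith) hvu.le)
    (div_nonneg (show (0:ℝ) ≤ t - u by linarith) hvu.le)
    (show (v - t) / (v - u) + (t - u) / (v - u) = 1 by field_simp; ring)
  have harg : ((v - t) / (v - u)) • u + ((t - u) / (v - u)) • v = t := by
    simp only [smul_eq_mul]; field_simp; ring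
  rw [harg] at key
  simpa [smul_eq_mul] using key

private lemma chord_le_right {c : ℝ → ℝ} (hc : ConvexOn ℝ Set.univ c) {u v t : ℝ}
    (huv : u < v) (hvt : v ≤ t) :
    c u + (c v - c u) / (v - u) * (t - u) ≤ c t := by
  have hvu : (0:ℝ) < v - u := by linarith
  rcases eq_or_lt_of_le hvt with rfl | hvt'
  · apply le_of_eq; field_simp; ring
  · have h := conv3 hc huv.le hvt (huv.trans hvt')
    have htu : (0:ℝ) < t - u := by linarith
    have key2 : (t - u) * c v ≤ (t - v) * c u + (v - u) * c t := by
      have h2 := mul_le_mul_of_nonneg_left h htu.le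
      have e : (t - u) * ((t - v) / (t - u) * c u + (v - u) / (t - u) * c t)
          = (t - v) * c u + (v - u) * c t := by field_simp
      linarith [e ▸ h2]
    have h3 : (c v - c u) * (t - u) / (v - u) ≤ c t - c u := by
      rw [div_le_iff₀ hvu]; nlinarith [key2]
    rw [div_mul_eq_mul_div]; linarith

private lemma chord_le_left {c : ℝ → ℝ} (hc : ConvexOn ℝ Set.univ c) {u v t : ℝ}
    (huv : u < v) (htu : t ≤ u) :
    c u + (c v - c u) / (v - u) * (t - u) ≤ c t := by
  have hvu : (0:ℝ) < v - u := by linarith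
  rcases eq_or_lt_of_le htu with rfl | htu'
  · apply le_of_eq; field_simp; ring
  · have h := conv3 hc htu (show u ≤ v from huv.le) (htu'.trans huv)
    have hvt : (0:ℝ) < v - t := by linarith
    have key2 : (v - t) * c u ≤ (v - u) * c t + (u - t) * c v := by
      have h2 := mul_le_mul_of_nonneg_left h hvt.le
      have e : (v - t) * ((v - u) / (v - t) * c t + (u - t) / (v - t) * c v)
          = (v - u) * c t + (u - t) * c v := by field_simp
      linarith [e ▸ h2]
    have h3 : (c v - c u) * (t - u) / (v - u) ≤ c t - c u := by
      rw [div_le_iff₀ hvu]; nlinarith [key2]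
    rw [div_mul_eq_mul_div]; linarith

private lemma chord_ge {c : ℝ → ℝ} (hc : ConvexOn ℝ Set.univ c) {u v t : ℝ}
    (huv : u < v) (h1 : u ≤ t) (h2 : t ≤ v) :
    c t ≤ c u + (c v - c u) / (v - u) * (t - u) := by
  have h := conv3 hc h1 h2 huv
  have hvu : (0:ℝ) < v - u := by linarith
  have e : (v - t) / (v - u) * c u + (t - u) / (v - u) * c v
      = c u + (c v - c u) / (v - u) * (t - u) := by field_simp; ring
  linarith [e ▸ h]

private lemma chord_le_max {cu cv u v t : ℝ} (huv : u < v) (h1 : u ≤ t) (h2 : t ≤ v) :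
    cu + (cv - cu) / (v - u) * (t - u) ≤ max cu cv := by
  have hvu : (0:ℝ) < v - u := by linarith
  rcases le_total cu cv with h | h
  · have hs : 0 ≤ (cv - cu) / (v - u) := div_nonneg (by linarith) hvu.le
    have h1' : (cv - cu) / (v - u) * (t - u) ≤ (cv - cu) / (v - u) * (v - u) :=
      mul_le_mul_of_nonneg_left (by linarith) hs
    have e : (cv - cu) / (v - u) * (v - u) = cv - cu := by field_simp
    have := le_max_right cu cv
    linarith
  · have hs : (cv - cu) / (v - u) ≤ 0 := div_nonpos_of_nonpos_of_nonneg (by linarith) hvu.le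
    have h1' : (cv - cu) / (v - u) * (t - u) ≤ 0 :=
      mul_nonpos_of_nonpos_of_nonneg hs (by linarith)
    have := le_max_left cu cv
    linarith

private lemma local_affine (f g c : ℝ → ℝ)
    (hfcont : Continuous f) (hgcont : Continuous g) (hccont : Continuous c)
    (hcc : ConvexOn ℝ Set.univ c) (hle : ∀ x, c x ≤ g x - f x)
    (hmax : ∀ d : ℝ → ℝ, ConvexOn ℝ Set.univ d → (∀ x, d x ≤ g x - f x) → ∀ x, d x ≤ c x)
    {r : ℝ} (hr : c r < g r - f r) :
    ∃ u v, u < r ∧ r < v ∧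
      ∀ t ∈ Icc u v, c t = c u + (c v - c u) / (v - u) * (t - u) := by
  set η := (g r - f r - c r) / 2 with hη
  have hη0 : 0 < η := by simp only [hη]; linarith
  have hU : IsOpen {t | c t < c r + η ∧ c r + η < g t - f t} :=
    (isOpen_lt hccont continuous_const).inter
      (isOpen_lt continuous_const (hgcont.sub hfcont))
  have hrU : r ∈ {t | c t < c r + η ∧ c r + η < g t - f t} :=
    ⟨by linarith, by simp only [hη]; linarith⟩
  obtain ⟨s, hs0, hball⟩ := Metric.isOpen_iff.1 hU r hrU
  set u := r - s / 2 with hu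
  set v := r + s / 2 with hv
  have huv : u < v := by simp only [hu, hv]; linarith
  have hsub : ∀ t ∈ Icc u v, c t < c r + η ∧ c r + η < g t - f t := by
    intro t ht
    apply hball
    rw [Metric.mem_ball, Real.dist_eq, abs_lt]
    have h1 := ht.1; have h2 := ht.2
    rw [hu] at h1; rw [hv] at h2
    constructor <;> linarith
  refine ⟨u, v, by simp only [hu]; linarith, by simp only [hv]; linarith, ?_⟩
  set ℓ := fun t => c u + (c v - c u) / (v - u) * (t - u) with hℓ
  have hℓconv : ConvexOn ℝ Set.univ ℓ := by
    have he : ℓ = fun t => ((c v - c u) / (v - u)) * t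
        + (c u - (c v - c u) / (v - u) * u) := by
      funext t; simp only [hℓ]; ring
    rw [he]; exact convexOn_affine _ _
  have hub : ∀ t, max (c t) (ℓ t) ≤ g t - f t := by
    intro t
    apply max_le (hle t)
    rcases le_or_gt t u with h | h
    · exact le_trans (chord_le_left hcc huv h) (hle t)
    rcases le_or_gt v t with h2 | h2
    · exact le_trans (chord_le_right hcc huv h2) (hle t)
    · have h3 := chord_le_max (cu := c u) (cv := c v) huv h.le h2.le
      have hcu := (hsub u ⟨le_refl u, huv.le⟩).1
      have hcv := (hsub v ⟨huv.le, le_refl v⟩).1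
      have h4 := (hsub t ⟨h.le, h2.le⟩).2
      have h5 : max (c u) (c v) ≤ c r + η := max_le hcu.le hcv.le
      have := h3.trans h5
      simp only [hℓ]
      linarith
  have hminor := hmax (fun t => max (c t) (ℓ t)) (hcc.sup hℓconv) hub
  have hlc : ∀ t, ℓ t ≤ c t := fun t => le_trans (le_max_right _ _) (hminor t)
  intro t ht
  exact le_antisymm (chord_ge hcc huv ht.1 ht.2) (hlc t)

private lemma main_ineq (f g c : ℝ → ℝ)
    (hf : ConvexOn ℝ Set.univ f) (hg : ConvexOn ℝ Set.univ g)
    (hcc : ConvexOn ℝ Set.univ c) (hle : ∀ x, c x ≤ g x - f x)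
    (hmax : ∀ d : ℝ → ℝ, ConvexOn ℝ Set.univ d → (∀ x, d x ≤ g x - f x) → ∀ x, d x ≤ c x)
    {x y a b : ℝ} (hxy : x < y) (ha : 0 < a) (hb : 0 < b) (hab : a + b = 1) :
    g (a * x + b * y) - c (a * x + b * y) ≤ a * (g x - c x) + b * (g y - c y) := by
  by_contra hcon
  push_neg at hcon
  have hfcont : Continuous f := continuousOn_univ.1 (hf.continuousOn isOpen_univ)
  have hgcont : Continuous g := continuousOn_univ.1 (hg.continuousOn isOpen_univ)
  have hccont : Continuous c := continuousOn_univ.1 (hcc.continuousOn isOpen_univ)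
  obtain ⟨z, hz⟩ : ∃ z, z = a * x + b * y := ⟨_, rfl⟩
  rw [← hz] at hcon
  have hxz : x < z := by
    have e : z - x = b * (y - x) := by rw [hz]; linear_combination x * hab
    have := mul_pos hb (sub_pos.2 hxy)
    linarith
  have hzy : z < y := by
    have e : y - z = a * (y - x) := by rw [hz]; linear_combination (-y) * hab
    have := mul_pos ha (sub_pos.2 hxy)
    linarith
  have hyx : (0:ℝ) < y - x := by linarith
  obtain ⟨ψ, hψeq⟩ : ∃ ψ : ℝ → ℝ, ∀ t, ψ t = g t - c t := ⟨_, fun _ => rfl⟩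
  obtain ⟨L, hLeq⟩ : ∃ L : ℝ → ℝ, ∀ t, L t = ψ x + (ψ y - ψ x) / (y - x) * (t - x) :=
    ⟨_, fun _ => rfl⟩
  obtain ⟨φ, hφeq⟩ : ∃ φ : ℝ → ℝ, ∀ t, φ t = ψ t - L t := ⟨_, fun _ => rfl⟩
  have hψcont : Continuous ψ := by
    have : ψ = fun t => g t - c t := funext hψeq
    rw [this]; exact hgcont.sub hccont
  have hLcont : Continuous L := by
    have : L = fun t => ψ x + (ψ y - ψ x) / (y - x) * (t - x) := funext hLeq
    rw [this]
    exact continuous_const.add (continuous_const.mul (continuous_id.sub continuous_const))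
  have hφcont : Continuous φ := by
    have : φ = fun t => ψ t - L t := funext hφeq
    rw [this]; exact hψcont.sub hLcont
  have hLx : L x = ψ x := by rw [hLeq]; ring
  have hLy : L y = ψ y := by rw [hLeq]; field_simp; ring
  have hLz : L z = a * ψ x + b * ψ y := by
    rw [hLeq, hz]
    have hab' : a = 1 - b := by linarith
    rw [hab']
    field_simp
    ring
  obtain ⟨t₀, ht₀mem, ht₀max⟩ :=
    isCompact_Icc.exists_isMaxOn (nonempty_Icc.2 hxy.le) hφcont.continuousOn
  obtain ⟨M, hM⟩ : ∃ M, M = φ t₀ := ⟨_, rfl⟩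
  have hmax' : ∀ t ∈ Icc x y, φ t ≤ M := by
    intro t ht; rw [hM]; exact isMaxOn_iff.1 ht₀max t ht
  have hM0 : 0 < M := by
    have h3 : 0 < φ z := by
      rw [hφeq, hLz, hψeq]
      have e1 := hψeq x; have e2 := hψeq y
      nlinarith [hcon, e1, e2, mul_le_mul_of_nonneg_left (le_of_eq e1) ha.le]
    have := hmax' z ⟨hxz.le, hzy.le⟩
    linarith
  set S := Icc x y ∩ φ ⁻¹' (Ici M) with hS
  have hScl : IsClosed S := isClosed_Icc.inter (isClosed_Ici.preimage hφcont)
  have hSne : S.Nonempty := ⟨t₀, ht₀mem, hM.le⟩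
  have hSbdd : BddAbove S := ⟨y, fun t ht => ht.1.2⟩
  obtain ⟨t₁, ht₁⟩ : ∃ t₁, t₁ = sSup S := ⟨_, rfl⟩
  have ht₁S : t₁ ∈ S := by rw [ht₁]; exact hScl.csSup_mem hSne hSbdd
  have ht₁Icc : t₁ ∈ Icc x y := ht₁S.1
  have hφt₁ : φ t₁ = M := le_antisymm (hmax' t₁ ht₁Icc) ht₁S.2
  have hφx : φ x = 0 := by rw [hφeq, hLx]; ring
  have hφy : φ y = 0 := by rw [hφeq, hLy]; ring
  have hxt₁ : x < t₁ := by
    rcases eq_or_lt_of_le ht₁Icc.1 with h | h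
    · exfalso; rw [← h] at hφt₁; rw [hφx] at hφt₁; linarith
    · exact h
  have ht₁y : t₁ < y := by
    rcases eq_or_lt_of_le ht₁Icc.2 with h | h
    · exfalso; rw [h] at hφt₁; rw [hφy] at hφt₁; linarith
    · exact h
  have hfψ : ∀ t, f t ≤ ψ t := by
    intro t; have := hle t; rw [hψeq]; linarith
  have hfL : ∀ t ∈ Icc x y, f t ≤ L t := by
    intro t ht
    have h1 := conv3 hf ht.1 ht.2 hxy
    have c1 : 0 ≤ (y - t) / (y - x) := div_nonneg (by linarith [ht.2]) hyx.le
    have c2 : 0 ≤ (t - x) / (y - x) := div_nonneg (by linarith [ht.1]) hyx.le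
    have h2 : (y - t) / (y - x) * f x + (t - x) / (y - x) * f y
        ≤ (y - t) / (y - x) * ψ x + (t - x) / (y - x) * ψ y := by
      have e1 := mul_le_mul_of_nonneg_left (hfψ x) c1
      have e2 := mul_le_mul_of_nonneg_left (hfψ y) c2
      linarith
    have h3 : (y - t) / (y - x) * ψ x + (t - x) / (y - x) * ψ y = L t := by
      rw [hLeq]; field_simp; ring
    exact (h1.trans h2).trans_eq h3
  by_cases hcase : c t₁ < g t₁ - f t₁
  · obtain ⟨u, v, hu, hv, haff⟩ :=
      local_affine f g c hfcont hgcont hccont hcc hle hmax hcase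
    obtain ⟨θ, hθdef⟩ : ∃ θ, θ = min (min (t₁ - u) (v - t₁)) (min (t₁ - x) (y - t₁)) :=
      ⟨_, rfl⟩
    have hA : θ ≤ t₁ - u := hθdef ▸ le_trans (min_le_left _ _) (min_le_left _ _)
    have hB : θ ≤ v - t₁ := hθdef ▸ le_trans (min_le_left _ _) (min_le_right _ _)
    have hC : θ ≤ t₁ - x := hθdef ▸ le_trans (min_le_right _ _) (min_le_left _ _)
    have hD : θ ≤ y - t₁ := hθdef ▸ le_trans (min_le_right _ _) (min_le_right _ _)
    have hθ0 : 0 < θ := by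
      rw [hθdef]
      exact lt_min (lt_min (by linarith) (by linarith)) (lt_min (by linarith) (by linarith))
    have hvu : (0:ℝ) < v - u := by linarith
    have hcp := haff (t₁ - θ) ⟨by linarith, by linarith⟩
    have hcq := haff (t₁ + θ) ⟨by linarith, by linarith⟩
    have hct := haff t₁ ⟨by linarith, by linarith⟩
    have hgconv : g t₁ ≤ (1/2) * g (t₁ - θ) + (1/2) * g (t₁ + θ) := by
      have h := conv3 hg (show t₁ - θ ≤ t₁ by linarith) (show t₁ ≤ t₁ + θ by linarith)
        (show t₁ - θ < t₁ + θ by linarith)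
      have e1 : (t₁ + θ - t₁) / (t₁ + θ - (t₁ - θ)) = 1/2 := by
        rw [show t₁ + θ - t₁ = θ by ring, show t₁ + θ - (t₁ - θ) = 2 * θ by ring]
        rw [div_eq_div_iff (by linarith) (by norm_num : (2:ℝ) ≠ 0)]
        ring
      have e2 : (t₁ - (t₁ - θ)) / (t₁ + θ - (t₁ - θ)) = 1/2 := by
        rw [show t₁ - (t₁ - θ) = θ by ring, show t₁ + θ - (t₁ - θ) = 2 * θ by ring]
        rw [div_eq_div_iff (by linarith) (by norm_num : (2:ℝ) ≠ 0)]
        ring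
      rw [e1, e2] at h
      linarith
    have hcaff : c t₁ = (1/2) * c (t₁ - θ) + (1/2) * c (t₁ + θ) := by
      rw [hcp, hcq, hct]; ring
    have hLaff : L t₁ = (1/2) * L (t₁ - θ) + (1/2) * L (t₁ + θ) := by
      simp only [hLeq]; try ring
    have hφp : φ (t₁ - θ) ≤ M := hmax' _ ⟨by linarith, by linarith⟩
    have hφq : φ (t₁ + θ) < M := by
      have hle' : φ (t₁ + θ) ≤ M := hmax' _ ⟨by linarith, by linarith⟩
      rcases eq_or_lt_of_le hle' with h | h
      · exfalso
        have hmem : t₁ + θ ∈ S := ⟨⟨by linarith, by linarith⟩, h.ge⟩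
        have h2 := le_csSup hSbdd hmem
        rw [← ht₁] at h2
        linarith
      · exact h
    have hcomb : φ t₁ ≤ (1/2) * φ (t₁ - θ) + (1/2) * φ (t₁ + θ) := by
      rw [hφeq, hφeq, hφeq, hψeq, hψeq, hψeq]
      linarith
    linarith
  · have h1 : c t₁ = g t₁ - f t₁ := le_antisymm (hle t₁) (by linarith [not_lt.1 hcase])
    have h2 : φ t₁ = g t₁ - c t₁ - L t₁ := by rw [hφeq, hψeq]
    have := hfL t₁ ht₁Icc
    rw [h1] at h2
    linarith

theorem stmt1 (f g c : ℝ → ℝ)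
    (hf : ConvexOn ℝ Set.univ f) (hg : ConvexOn ℝ Set.univ g)
    (hc : IsConvexHull (fun x => g x - f x) c) :
    ConvexOn ℝ Set.univ (fun x => g x - c x) := by
  obtain ⟨hcc, hle, hmaxc⟩ := hc
  have hle' : ∀ x, c x ≤ g x - f x := hle
  have hmax' : ∀ d : ℝ → ℝ, ConvexOn ℝ Set.univ d → (∀ x, d x ≤ g x - f x) →
      ∀ x, d x ≤ c x := hmaxc
  refine ⟨convex_univ, ?_⟩
  intro x _ y _ a b ha hb hab
  simp only [smul_eq_mul]
  rcases eq_or_lt_of_le ha with ha0 | ha0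
  · have hb1 : b = 1 := by linarith
    rw [← ha0, hb1]
    norm_num
  rcases eq_or_lt_of_le hb with hb0 | hb0
  · have ha1 : a = 1 := by linarith
    rw [← hb0, ha1]
    norm_num
  rcases lt_trichotomy x y with h | h | h
  · exact main_ineq f g c hf hg hcc hle' hmax' h ha0 hb0 hab
  · subst h
    have e : a * x + b * x = x := by linear_combination x * hab
    rw [e]
    have : b = 1 - a := by linarith
    rw [this]
    apply le_of_eq
    ring
  · have key := main_ineq f g c hf hg hcc hle' hmax' h hb0 ha0 (by linarith)
    have e : b * y + a * x = a * x + b * y := by ring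
    rw [e] at key
    linarith
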